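/- Let w be a word over the countably infinite alphabet 𝔄 with mul(w) = {a, b} for distinct letters a and b, such that exactly one block 𝐚 of w contains both a and b, and 𝐚 begins with a and contains b (that is, 𝐚 ∈ a⁺b{a,b}*). Let w′ be the word obtained from w by replacing the block 𝐚 with the block b𝐚. Then the ∼_Q-class of w equals the union [w]_β ∪ [w′]_β of the β-classes of w and w′. -/

import Mathlib

/-- Words over the countably infinite alphabet `ℕ`. -/
abbrev Word : Type := List ℕ

/-- A monoid `M` satisfies the identity `u ≈ v` if every substitution of letters by
elements of `M` (equivalently, every monoid homomorphism from the free monoid) equalizes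
`u` and `v`. -/
def Satisfies (M : Type*) [Monoid M] (u v : Word) : Prop :=
  ∀ φ : ℕ → M, (u.map φ).prod = (v.map φ).prod

/-- A set of words `W` is stable with respect to a monoid `M`. -/
def Stable (W : Set Word) (M : Type*) [Monoid M] : Prop :=
  ∀ u v : Word, u ∈ W → Satisfies M u v → v ∈ W

/-- `u` is a `τ`-term for the monoid `M`. -/
def IsTerm (τ : Word → Word → Prop) (M : Type*) [Monoid M] (u : Word) : Prop :=
  ∀ v : Word, Satisfies M u v → τ u v

/-- The set of simple letters of a word. -/
def simpSet (u : Word) : Set ℕ := {x | u.count x = 1}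

/-- The set of multiple letters of a word. -/
def mulSet (u : Word) : Set ℕ := {x | 2 ≤ u.count x}

/-- The set of letters of a word. -/
def conSet (u : Word) : Set ℕ := {x | x ∈ u}

/-- The monoid congruence on the free monoid generated by the pairs `(a, a²)`. -/
inductive tau1 : Word → Word → Prop
  | base (a : ℕ) : tau1 [a] [a, a]
  | refl (u : Word) : tau1 u u
  | symm {u v : Word} : tau1 u v → tau1 v u
  | trans {u v x : Word} : tau1 u v → tau1 v x → tau1 u x
  | append {u v u' v' : Word} : tau1 u v → tau1 u' v' → tau1 (u ++ u') (v ++ v')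

/-- The relation γ. -/
def gamma (u v : Word) : Prop := simpSet u = simpSet v ∧ mulSet u = mulSet v

/-- The relation `τ₁ ∧ γ`. -/
def tau1gamma (u v : Word) : Prop := tau1 u v ∧ gamma u v

/-- A word is block-simple if every factor all of whose letters are multiple
(in particular, every block) involves at most one letter. -/
def BlockSimple (u : Word) : Prop :=
  ∀ p f s : Word, u = p ++ f ++ s → (∀ x ∈ f, x ∈ mulSet u) →
    ∀ x ∈ f, ∀ y ∈ f, x = y

/-- `assemble m t A = A 0 ++ t 0 :: A 1 ++ t 1 :: ... ++ t (m-1) :: A m`: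
the word with blocks `A i` separated by the letters `t i`. -/
def assemble (m : ℕ) (t : Fin m → ℕ) (A : Fin (m + 1) → Word) : Word :=
  A 0 ++ (List.ofFn fun i : Fin m => t i :: A i.succ).flatten

/-- Common core of the relations `β` and `∼_Q`: `u` and `v` decompose into blocks
separated by the same simple letters in the same order, corresponding blocks have the
same content; when `withOrder = true`, in corresponding blocks the order of first
occurrences of letters coincides. -/
def betaAux (withOrder : Bool) (u v : Word) : Prop :=
  ∃ (m : ℕ) (t : Fin m → ℕ) (A B : Fin (m + 1) → Word),
    u = assemble m t A ∧ v = assemble m t B ∧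
    (∀ i : Fin m, u.count (t i) = 1) ∧ (∀ i : Fin m, v.count (t i) = 1) ∧
    (∀ i : Fin (m + 1), ∀ x ∈ A i, x ∈ mulSet u) ∧
    (∀ i : Fin (m + 1), ∀ x ∈ B i, x ∈ mulSet v) ∧
    (∀ i : Fin (m + 1), ∀ x : ℕ, x ∈ A i ↔ x ∈ B i) ∧
    (withOrder = true → ∀ i : Fin (m + 1), ∀ x y : ℕ, x ∈ A i → y ∈ A i → x ≠ y →
      ((A i).idxOf x < (A i).idxOf y ↔ (B i).idxOf x < (B i).idxOf y))

/-- The relation β. -/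
def beta : Word → Word → Prop := betaAux true

/-- The relation `∼_Q` (β without the condition on the order of first occurrences). -/
def simQ : Word → Word → Prop := betaAux false

/-- The words `u_n` (letters: `a = 0`, `b = 1`, `t_k = k + 1`). -/
def uW : ℕ → Word
  | 0 => [0, 0, 1, 1]
  | k + 1 => (if k % 2 = 0 then 0 else 1) :: (k + 2) :: uW k

/-- The words `v_n` (letters: `a = 0`, `b = 1`, `t_k = k + 1`). -/
def vW : ℕ → Word
  | 0 => [1, 1, 0, 0]
  | k + 1 => (if k % 2 = 0 then 0 else 1) :: (k + 2) :: vW k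

/-- A monoid satisfies the identity system
`Σ_n = {xtx ≈ xtx², xtx ≈ x²tx, xy²x ≈ x²y², u_n ≈ v_n}`. -/
def SatSigma (n : ℕ) (N : Type*) [Monoid N] : Prop :=
  Satisfies N [0, 1, 0] [0, 1, 0, 0] ∧ Satisfies N [0, 1, 0] [0, 0, 1, 0] ∧
  Satisfies N [0, 1, 1, 0] [0, 0, 1, 1] ∧ Satisfies N (uW n) (vW n)

/-- A monoid is finitely based. -/
def FinBased (M : Type*) [Monoid M] : Prop :=
  ∃ S : Finset (Word × Word),
    (∀ p ∈ S, Satisfies M p.1 p.2) ∧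
    ∀ (N : Type) [Monoid N], (∀ p ∈ S, Satisfies N p.1 p.2) →
      ∀ u v : Word, Satisfies M u v → Satisfies N u v

/-- `U_n = x y₁² y₂² ⋯ y_n² x` (letters: `x = 0`, `y_i = i`). -/
def Uw (n : ℕ) : Word := 0 :: (((List.range n).map fun i => [i + 1, i + 1]).flatten ++ [0])

/-- `V_n = x y₁² x y₂² x ⋯ x y_n² x` (letters: `x = 0`, `y_i = i`). -/
def Vw (n : ℕ) : Word := 0 :: ((List.range n).map fun i => [i + 1, i + 1, 0]).flatten

/-- The language `a⁺bb⁺ta⁺ = {aⁱ bʲ t aᵏ : i, k ≥ 1, j ≥ 2}` (`a = 0`, `b = 1`, `t = 2`). -/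
def Lab : Set Word := {w | ∃ i j k : ℕ, 1 ≤ i ∧ 2 ≤ j ∧ 1 ≤ k ∧
  w = List.replicate i 0 ++ List.replicate j 1 ++ 2 :: List.replicate k 0}

/-- The β-class of `atb²a` as an explicit language:
`{aⁱ t bʲ a w : i ≥ 1, j ≥ 2} ∪ {aⁱ t bʲ aᵏ b w : i, j, k ≥ 1}`, `w ∈ {a,b}*`
(`a = 0`, `b = 1`, `t = 2`). -/
def LatBBa : Set Word :=
  {w | (∃ i j : ℕ, 1 ≤ i ∧ 2 ≤ j ∧ ∃ r : Word, (∀ x ∈ r, x = 0 ∨ x = 1) ∧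
      w = List.replicate i 0 ++ 2 :: (List.replicate j 1 ++ 0 :: r)) ∨
    (∃ i j k : ℕ, 1 ≤ i ∧ 1 ≤ j ∧ 1 ≤ k ∧ ∃ r : Word, (∀ x ∈ r, x = 0 ∨ x = 1) ∧
      w = List.replicate i 0 ++ 2 :: (List.replicate j 1 ++ (List.replicate k 0 ++ 1 :: r)))}

/-- `u` is a factor (subword) of `x`. -/
def IsFactorOf (u x : Word) : Prop := ∃ p s : Word, x = p ++ u ++ s

/-- The syntactic congruence of a language `W`. -/
def SyntCon (W : Set Word) : Con (FreeMonoid ℕ) where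
  r u v := ∀ p s : Word,
    p ++ FreeMonoid.toList u ++ s ∈ W ↔ p ++ FreeMonoid.toList v ++ s ∈ W
  iseqv := ⟨fun _ _ _ => Iff.rfl, fun h p s => (h p s).symm,
    fun h h' p s => (h p s).trans (h' p s)⟩
  mul' := by
    intro w x y z h h' p s
    have h1 := h p (FreeMonoid.toList y ++ s)
    have h2 := h' (p ++ FreeMonoid.toList x) s
    simp only [FreeMonoid.toList_mul, List.append_assoc] at h1 h2 ⊢
    exact h1.trans h2

/-- The syntactic monoid of a language `W`. -/
abbrev SyntMonoid (W : Set Word) : Type := (SyntCon W).Quotient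

/-! ### Concrete finite monoids -/

/-- The 7-element monoid `A¹`: identity `e1` adjoined to the semigroup `A = ⟨a,b,c ∣ a²=a, b²=b, ab=ca=0, ac=cb=c⟩ = {a,b,c,ba,bc,0}` (`z0` is the zero). -/
inductive A1M : Type
  | e1 | a | b | c | ba | bc | z0
deriving DecidableEq

/-- Multiplication of `A1M`. -/
def A1M.mul : A1M → A1M → A1M
  | .e1, .e1 => .e1
  | .e1, .a => .a
  | .e1, .b => .b
  | .e1, .c => .c
  | .e1, .ba => .ba
  | .e1, .bc => .bc
  | .e1, .z0 => .z0
  | .a, .e1 => .a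
  | .a, .a => .a
  | .a, .b => .z0
  | .a, .c => .c
  | .a, .ba => .z0
  | .a, .bc => .z0
  | .a, .z0 => .z0
  | .b, .e1 => .b
  | .b, .a => .ba
  | .b, .b => .b
  | .b, .c => .bc
  | .b, .ba => .ba
  | .b, .bc => .bc
  | .b, .z0 => .z0
  | .c, .e1 => .c
  | .c, .a => .z0
  | .c, .b => .c
  | .c, .c => .z0
  | .c, .ba => .z0
  | .c, .bc => .z0
  | .c, .z0 => .z0
  | .ba, .e1 => .ba
  | .ba, .a => .ba
  | .ba, .b => .z0
  | .ba, .c => .bc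
  | .ba, .ba => .z0
  | .ba, .bc => .z0
  | .ba, .z0 => .z0
  | .bc, .e1 => .bc
  | .bc, .a => .z0
  | .bc, .b => .bc
  | .bc, .c => .z0
  | .bc, .ba => .z0
  | .bc, .bc => .z0
  | .bc, .z0 => .z0
  | .z0, .e1 => .z0
  | .z0, .a => .z0
  | .z0, .b => .z0
  | .z0, .c => .z0
  | .z0, .ba => .z0
  | .z0, .bc => .z0
  | .z0, .z0 => .z0

instance : Monoid A1M where
  one := .e1
  mul := A1M.mul
  mul_assoc := by intro x y z; cases x <;> cases y <;> cases z <;> rfl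
  one_mul := by intro x; cases x <;> rfl
  mul_one := by intro x; cases x <;> rfl
/-- The 6-element monoid `E¹`: identity `e1` adjoined to the semigroup `E = ⟨a,b,c ∣ a²=ab=0, ba=ca=a, b²=bc=b, c²=cb=c⟩ = {a,b,c,ac,0}` (`z0` is the zero). -/
inductive E1M : Type
  | e1 | a | b | c | ac | z0
deriving DecidableEq

/-- Multiplication of `E1M`. -/
def E1M.mul : E1M → E1M → E1M
  | .e1, .e1 => .e1
  | .e1, .a => .a
  | .e1, .b => .b
  | .e1, .c => .c
  | .e1, .ac => .ac
  | .e1, .z0 => .z0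
  | .a, .e1 => .a
  | .a, .a => .z0
  | .a, .b => .z0
  | .a, .c => .ac
  | .a, .ac => .z0
  | .a, .z0 => .z0
  | .b, .e1 => .b
  | .b, .a => .a
  | .b, .b => .b
  | .b, .c => .b
  | .b, .ac => .ac
  | .b, .z0 => .z0
  | .c, .e1 => .c
  | .c, .a => .a
  | .c, .b => .c
  | .c, .c => .c
  | .c, .ac => .ac
  | .c, .z0 => .z0
  | .ac, .e1 => .ac
  | .ac, .a => .z0
  | .ac, .b => .ac
  | .ac, .c => .ac
  | .ac, .ac => .z0
  | .ac, .z0 => .z0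
  | .z0, .e1 => .z0
  | .z0, .a => .z0
  | .z0, .b => .z0
  | .z0, .c => .z0
  | .z0, .ac => .z0
  | .z0, .z0 => .z0

instance : Monoid E1M where
  one := .e1
  mul := E1M.mul
  mul_assoc := by intro x y z; cases x <;> cases y <;> cases z <;> rfl
  one_mul := by intro x; cases x <;> rfl
  mul_one := by intro x; cases x <;> rfl
/-- The 5-element monoid `A₀¹`: identity `e1` adjoined to the semigroup `A₀ = ⟨a,b ∣ a²=a, b²=b, ab=0⟩ = {a,b,ba,0}` (`z0` is the zero). -/
inductive A01M : Type
  | e1 | a | b | ba | z0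
deriving DecidableEq

/-- Multiplication of `A01M`. -/
def A01M.mul : A01M → A01M → A01M
  | .e1, .e1 => .e1
  | .e1, .a => .a
  | .e1, .b => .b
  | .e1, .ba => .ba
  | .e1, .z0 => .z0
  | .a, .e1 => .a
  | .a, .a => .a
  | .a, .b => .z0
  | .a, .ba => .z0
  | .a, .z0 => .z0
  | .b, .e1 => .b
  | .b, .a => .ba
  | .b, .b => .b
  | .b, .ba => .ba
  | .b, .z0 => .z0
  | .ba, .e1 => .ba
  | .ba, .a => .ba
  | .ba, .b => .z0
  | .ba, .ba => .z0
  | .ba, .z0 => .z0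
  | .z0, .e1 => .z0
  | .z0, .a => .z0
  | .z0, .b => .z0
  | .z0, .ba => .z0
  | .z0, .z0 => .z0

instance : Monoid A01M where
  one := .e1
  mul := A01M.mul
  mul_assoc := by intro x y z; cases x <;> cases y <;> cases z <;> rfl
  one_mul := by intro x; cases x <;> rfl
  mul_one := by intro x; cases x <;> rfl


/-- The 3-element monoid `L₂¹`: the two-element left-zero semigroup with identity adjoined. -/
inductive LZ1 : Type
  | e | a | b
deriving DecidableEq

instance : Fintype LZ1 := ⟨{.e, .a, .b}, by intro x; cases x <;> decide⟩

instance : Monoid LZ1 where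
  one := .e
  mul x y := match x with
    | .e => y
    | .a => .a
    | .b => .b
  mul_assoc := by decide
  one_mul := by decide
  mul_one := by decide

/-- The 3-element monoid `M(x) = {1, x, 0}` with `x·x = 0`. -/
inductive MX : Type
  | e | x | z
deriving DecidableEq

instance : Fintype MX := ⟨{.e, .x, .z}, by intro x; cases x <;> decide⟩

instance : Monoid MX where
  one := .e
  mul a b := match a, b with
    | .e, b => b
    | a, .e => a
    | _, _ => .z
  mul_assoc := by decide
  one_mul := by decide
  mul_one := by decide

def asmL (a0 : Word) (L : List (ℕ × Word)) : Word :=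
  a0 ++ (L.map fun p => p.1 :: p.2).flatten

lemma asmL_cons (a0 : Word) (p : ℕ × Word) (L : List (ℕ × Word)) :
    asmL a0 (p :: L) = asmL (a0 ++ p.1 :: p.2) L := by
  simp [asmL]

lemma assemble_eq_asmL (m : ℕ) (t : Fin m → ℕ) (A : Fin (m+1) → Word) :
    assemble m t A = asmL (A 0) (List.ofFn fun i => (t i, A i.succ)) := by
  simp only [assemble, asmL, List.map_ofFn]
  rfl

lemma prefix_uniq (u : Word) (a0 : Word) : ∀ (a0' r r' : Word),
    a0 ++ r = a0' ++ r' →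
    (∀ x ∈ a0, 2 ≤ u.count x) → (∀ x ∈ a0', 2 ≤ u.count x) →
    (∀ y l, r = y :: l → u.count y = 1) → (∀ y l, r' = y :: l → u.count y = 1) →
    a0 = a0' := by
  induction a0 with
  | nil =>
    intro a0' r r' h hm hm' hr hr'
    cases a0' with
    | nil => rfl
    | cons c tl =>
      have hc : u.count c = 1 := hr c (tl ++ r') (by simpa using h)
      have := hm' c (by simp)
      omega
  | cons c tl ih =>
    intro a0' r r' h hm hm' hr hr'
    cases a0' with
    | nil =>
      have hc : u.count c = 1 := hr' c (tl ++ r) (by simpa using h.symm)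
      have := hm c (by simp)
      omega
    | cons c' tl' =>
      simp only [List.cons_append, List.cons.injEq] at h
      obtain ⟨rfl, h2⟩ := h
      rw [ih tl' r r' h2 (fun x hx => hm x (by simp [hx])) (fun x hx => hm' x (by simp [hx])) hr hr']

lemma flatten_head (u : Word) (L : List (ℕ × Word)) (h : ∀ p ∈ L, u.count p.1 = 1)
    (y : ℕ) (l : Word) (he : (L.map fun p => p.1 :: p.2).flatten = y :: l) : u.count y = 1 := by
  cases L with
  | nil => simp at he
  | cons p L2 =>
    simp only [List.map_cons, List.flatten_cons, List.cons_append, List.cons.injEq] at he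
    exact he.1 ▸ h p (List.mem_cons_self)

lemma asmL_uniq (u : Word) (L : List (ℕ × Word)) : ∀ (L' : List (ℕ × Word)) (a0 a0' : Word),
    (∀ x ∈ a0, 2 ≤ u.count x) → (∀ p ∈ L, u.count p.1 = 1) →
    (∀ p ∈ L, ∀ x ∈ p.2, 2 ≤ u.count x) →
    (∀ x ∈ a0', 2 ≤ u.count x) → (∀ p ∈ L', u.count p.1 = 1) →
    (∀ p ∈ L', ∀ x ∈ p.2, 2 ≤ u.count x) →
    asmL a0 L = asmL a0' L' → a0 = a0' ∧ L = L' := by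
  induction L with
  | nil =>
    intro L' a0 a0' hm ht hb hm' ht' hb' he
    have h0 : a0 = a0' :=
      prefix_uniq u a0 a0' _ _ he hm hm' (fun y l hy => flatten_head u [] ht y l hy)
        (fun y l hy => flatten_head u L' ht' y l hy)
    subst h0
    have h2 : ((([] : List (ℕ × Word)).map fun p => p.1 :: p.2).flatten)
        = (L'.map fun p => p.1 :: p.2).flatten := List.append_cancel_left he
    refine ⟨rfl, ?_⟩
    cases L' with
    | nil => rfl
    | cons p L2 => simp at h2
  | cons p L2 ih =>
    intro L' a0 a0' hm ht hb hm' ht' hb' he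
    have h0 : a0 = a0' :=
      prefix_uniq u a0 a0' _ _ he hm hm' (fun y l hy => flatten_head u (p :: L2) ht y l hy)
        (fun y l hy => flatten_head u L' ht' y l hy)
    subst h0
    have h2 : ((p :: L2).map (fun p => p.1 :: p.2)).flatten
        = (L'.map fun p => p.1 :: p.2).flatten := List.append_cancel_left he
    cases L' with
    | nil => simp at h2
    | cons p' L2' =>
      simp only [List.map_cons, List.flatten_cons, List.cons_append, List.cons.injEq] at h2
      obtain ⟨hfst, h3⟩ := h2
      have hsnd : p.2 = p'.2 :=
        prefix_uniq u p.2 p'.2 _ _ h3 (hb p (List.mem_cons_self))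
          (hb' p' (List.mem_cons_self))
          (fun y l hy => flatten_head u L2 (fun q hq => ht q (List.mem_cons_of_mem _ hq)) y l hy)
          (fun y l hy => flatten_head u L2' (fun q hq => ht' q (List.mem_cons_of_mem _ hq)) y l hy)
      have h4 : (L2.map (fun p => p.1 :: p.2)).flatten = (L2'.map fun p => p.1 :: p.2).flatten := by
        rw [hsnd] at h3; exact List.append_cancel_left h3
      have := ih L2' [] [] (by simp) (fun q hq => ht q (List.mem_cons_of_mem _ hq))
        (fun q hq => hb q (List.mem_cons_of_mem _ hq)) (by simp)
        (fun q hq => ht' q (List.mem_cons_of_mem _ hq))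
        (fun q hq => hb' q (List.mem_cons_of_mem _ hq)) (by simpa [asmL] using h4)
      exact ⟨rfl, by rw [this.2, Prod.ext hfst hsnd]⟩

lemma assemble_uniq {u : Word} {m m' : ℕ} {t : Fin m → ℕ} {t' : Fin m' → ℕ}
    {A : Fin (m+1) → Word} {A' : Fin (m'+1) → Word}
    (hu : u = assemble m t A) (hu' : u = assemble m' t' A')
    (h1 : ∀ i, u.count (t i) = 1) (h2 : ∀ i, ∀ x ∈ A i, 2 ≤ u.count x)
    (h1' : ∀ i, u.count (t' i) = 1) (h2' : ∀ i, ∀ x ∈ A' i, 2 ≤ u.count x) :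
    ∃ hm : m' = m, (HEq t t' ∧ HEq A A') := by
  have key := asmL_uniq u (List.ofFn fun i => (t i, A i.succ))
      (List.ofFn fun i => (t' i, A' i.succ)) (A 0) (A' 0)
      (h2 0)
      (by intro p hp; rw [List.mem_ofFn] at hp; obtain ⟨i, rfl⟩ := hp; exact h1 i)
      (by intro p hp; rw [List.mem_ofFn] at hp; obtain ⟨i, rfl⟩ := hp; exact h2 i.succ)
      (h2' 0)
      (by intro p hp; rw [List.mem_ofFn] at hp; obtain ⟨i, rfl⟩ := hp; exact h1' i)
      (by intro p hp; rw [List.mem_ofFn] at hp; obtain ⟨i, rfl⟩ := hp; exact h2' i.succ)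
      (by rw [← assemble_eq_asmL, ← assemble_eq_asmL, ← hu, ← hu'])
  obtain ⟨h0, hL⟩ := key
  have hm : m' = m := by
    have := congrArg List.length hL
    simpa using this.symm
  subst hm
  rw [List.ofFn_inj] at hL
  refine ⟨rfl, heq_of_eq ?_, heq_of_eq ?_⟩
  · funext i
    exact congrArg Prod.fst (congrFun hL i)
  · funext i
    refine Fin.cases ?_ ?_ i
    · exact h0
    · intro k; exact congrArg Prod.snd (congrFun hL k)

lemma asmL_set (c : Word) : ∀ (L : List (ℕ × Word)) (k : ℕ) (a0 : Word) (tk : ℕ) (bl : Word),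
    L[k]? = some (tk, bl) →
    ∃ p s, asmL a0 L = p ++ bl ++ s ∧ asmL a0 (L.set k (tk, c)) = p ++ c ++ s := by
  intro L
  induction L with
  | nil => intro k a0 tk bl h; simp at h
  | cons q L2 ih =>
    intro k a0 tk bl h
    cases k with
    | zero =>
      simp only [List.getElem?_cons_zero, Option.some.injEq] at h
      subst h
      exact ⟨a0 ++ [tk], (L2.map fun p => p.1 :: p.2).flatten, by simp [asmL], by simp [asmL]⟩
    | succ k =>
      simp only [List.getElem?_cons_succ] at h
      obtain ⟨p, s, e1, e2⟩ := ih k (a0 ++ q.1 :: q.2) tk bl h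
      exact ⟨p, s, by rw [asmL_cons]; exact e1, by rw [show (q :: L2).set (k+1) (tk, c) = q :: L2.set k (tk, c) from rfl, asmL_cons]; exact e2⟩

lemma assemble_update (m : ℕ) (t : Fin m → ℕ) (A : Fin (m+1) → Word) (j : Fin (m+1)) (c : Word) :
    ∃ p s, assemble m t A = p ++ A j ++ s ∧
      assemble m t (Function.update A j c) = p ++ c ++ s := by
  refine Fin.cases ?_ ?_ j
  · refine ⟨[], (List.ofFn fun i : Fin m => t i :: A i.succ).flatten, by simp [assemble], ?_⟩
    have h2 : ∀ i : Fin m, Function.update A 0 c i.succ = A i.succ :=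
      fun i => Function.update_of_ne (Fin.succ_ne_zero i) _ _
    simp [assemble, Function.update_self, h2]
  · intro k
    have hget : (List.ofFn fun i : Fin m => (t i, A i.succ))[(k : ℕ)]?
        = some (t k, A k.succ) := by
      simp [List.getElem?_ofFn, k.isLt]
    obtain ⟨p, s, e1, e2⟩ := asmL_set c (List.ofFn fun i => (t i, A i.succ)) k (A 0)
      (t k) (A k.succ) hget
    refine ⟨p, s, by rw [assemble_eq_asmL]; exact e1, ?_⟩
    rw [assemble_eq_asmL]
    have h0 : Function.update A k.succ c 0 = A 0 :=
      Function.update_of_ne (Ne.symm (Fin.succ_ne_zero k)) _ _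
    have hL : (List.ofFn fun i => (t i, Function.update A k.succ c i.succ))
        = (List.ofFn fun i => (t i, A i.succ)).set (k : ℕ) (t k, c) := by
      apply List.ext_getElem
      · simp
      · intro n h1 h2
        simp only [List.getElem_ofFn, List.getElem_set, List.getElem_ofFn] at *
        by_cases hn : (k : ℕ) = n
        · subst hn
          have : (⟨(k : ℕ), by simpa using h1⟩ : Fin m) = k := by ext; rfl
          simp [this, Function.update_self]
        · rw [if_neg hn]
          congr 1
          apply Function.update_of_ne
          intro hcon
          apply hn
          have := congrArg (fun z : Fin (m+1) => (z : ℕ)) hcon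
          simpa using this.symm
    rw [h0, hL]
    exact e2
lemma idxOf_ne_of_mem {l : Word} {x y : ℕ} (hx : x ∈ l) (hy : y ∈ l) (hxy : x ≠ y) :
    l.idxOf x ≠ l.idxOf y := by
  intro h
  have h1 : l.idxOf x < l.length := List.idxOf_lt_length_iff.mpr hx
  have h2 : l.idxOf y < l.length := List.idxOf_lt_length_iff.mpr hy
  have g1 : l.get ⟨l.idxOf x, h1⟩ = x := List.idxOf_get h1
  have g2 : l.get ⟨l.idxOf y, h2⟩ = y := List.idxOf_get h2
  apply hxy
  rw [← g1, ← g2]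
  congr 1
  exact Fin.ext h

theorem stmt0 (a b : ℕ) (hab : a ≠ b) (w w' : Word)
    (m : ℕ) (t : Fin m → ℕ) (A : Fin (m + 1) → Word) (j : Fin (m + 1))
    (hw : w = assemble m t A)
    (ht : ∀ i : Fin m, w.count (t i) = 1)
    (hA : ∀ i : Fin (m + 1), ∀ x ∈ A i, x ∈ mulSet w)
    (hmul : mulSet w = {a, b})
    (hblock : ∃ (i : ℕ) (r : Word), 1 ≤ i ∧ (∀ x ∈ r, x = a ∨ x = b) ∧
      A j = List.replicate i a ++ b :: r)
    (honly : ∀ i : Fin (m + 1), i ≠ j → ¬(a ∈ A i ∧ b ∈ A i))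
    (hw' : w' = assemble m t (Function.update A j (b :: A j))) :
    {x | simQ w x} = {x | beta w x} ∪ {x | beta w' x} := by
  obtain ⟨ia, r, hia, hr, hAj⟩ := hblock
  obtain ⟨ia', rfl⟩ : ∃ k, ia = k + 1 := ⟨ia - 1, by omega⟩
  have hAj' : A j = a :: (List.replicate ia' a ++ b :: r) := by
    rw [hAj, List.replicate_succ, List.cons_append]
  have hamem : a ∈ A j := by rw [hAj']; exact List.mem_cons_self
  have hbmem : b ∈ A j := by rw [hAj']; simp
  have hmula : 2 ≤ w.count a := by
    have : a ∈ mulSet w := by rw [hmul]; exact Set.mem_insert _ _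
    exact this
  have hmulb : 2 ≤ w.count b := by
    have : b ∈ mulSet w := by rw [hmul]; simp
    exact this
  obtain ⟨p₀, s₀, e₁, e₂⟩ := assemble_update m t A j (b :: A j)
  rw [← hw] at e₁
  rw [← hw'] at e₂
  have hcount' : ∀ y, w'.count y = w.count y + if y = b then 1 else 0 := by
    intro y
    rw [e₁, e₂]
    by_cases hy : y = b
    · subst hy; simp [List.count_append, List.count_cons_self]; omega
    · simp [List.count_append, List.count_cons_of_ne (Ne.symm hy), hy]
  have ht' : ∀ i, w'.count (t i) = 1 := by
    intro i
    have h1 := ht i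
    have h2 : t i ≠ b := fun h => by rw [h] at h1; omega
    rw [hcount' (t i), if_neg h2]
    omega
  have hcw' : ∀ y, w.count y ≤ w'.count y := by
    intro y; rw [hcount' y]; split <;> omega
  have hb'A : ∀ i, ∀ x ∈ Function.update A j (b :: A j) i, x ∈ mulSet w' := by
    intro i x hx
    have hxw : x ∈ mulSet w := by
      by_cases hij : i = j
      · obtain rfl := hij.symm
        rw [Function.update_self] at hx
        rcases List.mem_cons.mp hx with rfl | hx'
        · rw [hmul]; simp
        · exact hA j x hx'
      · rw [Function.update_of_ne hij] at hx; exact hA i x hx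
    have h2 : 2 ≤ w.count x := hxw
    exact le_trans h2 (hcw' x)
  have hsub : ∀ i, ∀ x ∈ A i, x = a ∨ x = b := by
    intro i x hx
    have := hA i x hx
    rw [hmul] at this
    simpa using this
  have honly' : ∀ i : Fin (m+1), i ≠ j → ∀ x ∈ A i, ∀ y ∈ A i, x ≠ y → False := by
    intro i hij x hx y hy hxy
    rcases hsub i x hx with rfl | rfl <;> rcases hsub i y hy with rfl | rfl
    · exact hxy rfl
    · exact honly i hij ⟨hx, hy⟩
    · exact honly i hij ⟨hy, hx⟩
    · exact hxy rfl
  have hA0 : (A j).idxOf a = 0 := by rw [hAj']; exact List.idxOf_cons_self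
  have hAb : 0 < (A j).idxOf b := by
    rw [hAj', List.idxOf_cons_ne _ hab]; omega
  have hBb0 : (b :: A j).idxOf b = 0 := List.idxOf_cons_self
  have hBa : 0 < (b :: A j).idxOf a := by
    rw [List.idxOf_cons_ne _ (Ne.symm hab)]; omega
  ext v
  simp only [Set.mem_setOf_eq, Set.mem_union]
  constructor
  · rintro ⟨m₁, t₁, A₁, B, hv1, hv2, hc1, hc2, hb1, hb2, hcon, -⟩
    obtain ⟨hm, htH, hAH⟩ := assemble_uniq hv1 hw hc1 (fun i x hx => hb1 i x hx) ht
      (fun i x hx => hA i x hx)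
    subst hm
    obtain rfl := (eq_of_heq htH).symm
    obtain rfl := (eq_of_heq hAH).symm
    have hamemB : a ∈ B j := (hcon j a).mp hamem
    have hbmemB : b ∈ B j := (hcon j b).mp hbmem
    rcases lt_or_gt_of_ne (idxOf_ne_of_mem hamemB hbmemB hab) with hlt | hgt
    · left
      refine ⟨m, t, A, B, hw, hv2, ht, hc2, hA, hb2, hcon, ?_⟩
      intro _ i x y hx hy hxy
      by_cases hij : i = j
      · obtain rfl := hij.symm
        rcases hsub j x hx with rfl | rfl <;> rcases hsub j y hy with rfl | rfl
        · exact absurd rfl hxy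
        · exact iff_of_true (by omega) hlt
        · exact iff_of_false (by omega) (by omega)
        · exact absurd rfl hxy
      · exact (honly' i hij x hx y hy hxy).elim
    · right
      refine ⟨m, t, Function.update A j (b :: A j), B, hw', hv2, ht', hc2, hb'A, hb2, ?_, ?_⟩
      · intro i x
        by_cases hij : i = j
        · obtain rfl := hij.symm
          rw [Function.update_self]
          constructor
          · intro hx
            rcases List.mem_cons.mp hx with rfl | hx'
            · exact hbmemB
            · exact (hcon j x).mp hx'
          · intro hx
            exact List.mem_cons_of_mem _ ((hcon j x).mpr hx)
        · rw [Function.update_of_ne hij]; exact hcon i x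
      · intro _ i x y hx hy hxy
        by_cases hij : i = j
        · obtain rfl := hij.symm
          rw [Function.update_self] at hx hy ⊢
          have hx' : x = a ∨ x = b := by
            rcases List.mem_cons.mp hx with rfl | h
            · exact Or.inr rfl
            · exact hsub j x h
          have hy' : y = a ∨ y = b := by
            rcases List.mem_cons.mp hy with rfl | h
            · exact Or.inr rfl
            · exact hsub j y h
          rcases hx' with rfl | rfl <;> rcases hy' with rfl | rfl
          · exact absurd rfl hxy
          · exact iff_of_false (by omega) (by omega)
          · exact iff_of_true (by omega) hgt
          · exact absurd rfl hxy
        · rw [Function.update_of_ne hij] at hx hy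
          exact (honly' i hij x hx y hy hxy).elim
  · rintro (⟨m₁, t₁, A₁, B, h1, h2, h3, h4, h5, h6, h7, -⟩ |
      ⟨m₂, t₂, A₂, B, h1, h2, h3, h4, h5, h6, h7, -⟩)
    · exact ⟨m₁, t₁, A₁, B, h1, h2, h3, h4, h5, h6, h7, by intro hh; exact absurd hh (by decide)⟩
    · obtain ⟨hm, htH, hAH⟩ := assemble_uniq h1 hw' h3 (fun i x hx => h5 i x hx) ht'
        (fun i x hx => hb'A i x hx)
      subst hm
      obtain rfl := (eq_of_heq htH).symm
      obtain rfl := (eq_of_heq hAH).symm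
      refine ⟨m, t, A, B, hw, h2, ht, h4, hA, h6, ?_, by intro hh; exact absurd hh (by decide)⟩
      intro i x
      by_cases hij : i = j
      · obtain rfl := hij.symm
        have hij2 := h7 j x
        rw [Function.update_self] at hij2
        constructor
        · intro hx; exact hij2.mp (List.mem_cons_of_mem _ hx)
        · intro hx
          rcases List.mem_cons.mp (hij2.mpr hx) with rfl | h
          · exact hbmem
          · exact h
      · have hij2 := h7 i x
        rw [Function.update_of_ne hij] at hij2
        exact hij2
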